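/- For a random unit vector ψ uniformly distributed on the unit sphere in ℂ^d and Hermitian matrices A, B ∈ ℂ^{d×d}, the expectation of ⟨ψ|A|ψ⟩⟨ψ|B|ψ⟩ equals (Tr(A)Tr(B) + Tr(AB)) / (d(d+1)). -/

import Mathlib

open MeasureTheory Matrix

namespace Stmt1Aux

variable {d : ℕ}
def mono (i j k l : Fin d) (ψ : Fin d → ℂ) : ℂ :=
  (starRingEnd ℂ) (ψ i) * ψ j * ((starRingEnd ℂ) (ψ k) * ψ l)

lemma mono_continuous (i j k l : Fin d) : Continuous (mono i j k l) := by
  unfold mono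
  exact ((Complex.continuous_conj.comp (continuous_apply i)).mul (continuous_apply j)).mul
    ((Complex.continuous_conj.comp (continuous_apply k)).mul (continuous_apply l))

lemma mulVec_measurable (U : Matrix (Fin d) (Fin d) ℂ) :
    Measurable (fun ψ : Fin d → ℂ => U.mulVec ψ) := by
  apply measurable_pi_lambda
  intro i
  simp only [Matrix.mulVec, dotProduct]
  exact Finset.measurable_sum _ fun j _ => by fun_prop

lemma integral_inv' (μ : Measure (Fin d → ℂ))
    (hinv : ∀ U ∈ Matrix.unitaryGroup (Fin d) ℂ, μ.map (fun ψ => U.mulVec ψ) = μ)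
    (U : Matrix (Fin d) (Fin d) ℂ) (hU : U ∈ Matrix.unitaryGroup (Fin d) ℂ)
    (f : (Fin d → ℂ) → ℂ) (hf : AEStronglyMeasurable f μ) :
    ∫ ψ, f ψ ∂μ = ∫ ψ, f (U.mulVec ψ) ∂μ := by
  conv_lhs => rw [← hinv U hU]
  rw [integral_map (mulVec_measurable U).aemeasurable]
  rw [hinv U hU]; exact hf

lemma diagonal_unitary (u : Fin d → ℂ) (hu : ∀ m, u m * (starRingEnd ℂ) (u m) = 1) :
    Matrix.diagonal u ∈ Matrix.unitaryGroup (Fin d) ℂ := by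
  rw [Matrix.mem_unitaryGroup_iff]
  have : (star (Matrix.diagonal u) : Matrix (Fin d) (Fin d) ℂ)
      = Matrix.diagonal (fun m => (starRingEnd ℂ) (u m)) := by
    ext a b
    simp [Matrix.star_apply, Matrix.diagonal_apply]
    split_ifs with h1 h2 h2 <;> simp_all [eq_comm]
  rw [this, Matrix.diagonal_mul_diagonal]
  ext a b
  simp [Matrix.diagonal_apply, Matrix.one_apply, hu]

lemma key_exists (i j k l : Fin d) (h1 : ¬(i = j ∧ k = l)) (h2 : ¬(i = l ∧ j = k)) :
    ∃ m, ((if m = i then 1 else 0) + (if m = k then 1 else 0) : ℤ)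
       ≠ (if m = j then 1 else 0) + (if m = l then 1 else 0) := by
  by_contra hcon
  push_neg at hcon
  have hi := hcon i
  have hj := hcon j
  have hk := hcon k
  have hl := hcon l
  by_cases hij : i = j <;> by_cases hik : i = k <;> by_cases hil : i = l <;>
    by_cases hjk : j = k <;> by_cases hjl : j = l <;> by_cases hkl : k = l <;>
    simp_all

lemma phase_zero (μ : Measure (Fin d → ℂ))
    (hinv : ∀ U ∈ Matrix.unitaryGroup (Fin d) ℂ, μ.map (fun ψ => U.mulVec ψ) = μ)
    (i j k l : Fin d) (h1 : ¬(i = j ∧ k = l)) (h2 : ¬(i = l ∧ j = k)) :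
    ∫ ψ, mono i j k l ψ ∂μ = 0 := by
  obtain ⟨m, hm⟩ := key_exists i j k l h1 h2
  set u : Fin d → ℂ := fun n => if m = n then Complex.I else 1 with hu_def
  have hu : ∀ n, u n * (starRingEnd ℂ) (u n) = 1 := by
    intro n; simp only [hu_def]; split_ifs <;> simp [Complex.mul_conj]
  set F : ℂ := (starRingEnd ℂ) (u i) * u j * ((starRingEnd ℂ) (u k) * u l) with hF_def
  have hId : ∫ ψ, mono i j k l ψ ∂μ = F * ∫ ψ, mono i j k l ψ ∂μ := by
    conv_lhs => rw [integral_inv' μ hinv _ (diagonal_unitary u hu) _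
      (mono_continuous i j k l).aestronglyMeasurable]
    rw [← integral_const_mul]
    congr 1; funext ψ
    simp only [mono, Matrix.mulVec_diagonal, _root_.map_mul, hF_def]
    ring
  have hFne : F ≠ 1 := by
    simp only [hF_def, hu_def]
    by_cases hmi : m = i <;> by_cases hmj : m = j <;> by_cases hmk : m = k <;>
      by_cases hml : m = l <;>
      simp_all [Complex.ext_iff] <;> norm_num
  have : (1 - F) * ∫ ψ, mono i j k l ψ ∂μ = 0 := by
    rw [sub_mul, one_mul, ← hId, sub_self]
  rcases mul_eq_zero.1 this with h | h
  · exact ((hFne (sub_eq_zero.1 h).symm)).elim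
  · exact h

lemma ae_bound (μ : Measure (Fin d → ℂ))
    (hsphere : ∀ᵐ ψ ∂μ, ∑ i, Complex.normSq (ψ i) = 1) :
    ∀ᵐ ψ ∂μ, ∀ m, ‖ψ m‖ ≤ 1 := by
  filter_upwards [hsphere] with ψ hψ m
  have h1 : Complex.normSq (ψ m) ≤ 1 := by
    rw [← hψ]
    exact Finset.single_le_sum (f := fun i => Complex.normSq (ψ i))
      (fun i _ => Complex.normSq_nonneg _) (Finset.mem_univ m)
  have := Complex.normSq_eq_norm_sq (ψ m)
  nlinarith [norm_nonneg (ψ m)]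

lemma mono_integrable (μ : Measure (Fin d → ℂ)) [IsProbabilityMeasure μ]
    (hsphere : ∀ᵐ ψ ∂μ, ∑ i, Complex.normSq (ψ i) = 1) (i j k l : Fin d) :
    Integrable (mono i j k l) μ := by
  apply Integrable.mono' (integrable_const (1:ℝ)) (mono_continuous i j k l).aestronglyMeasurable
  filter_upwards [ae_bound μ hsphere] with ψ hψ
  unfold mono
  calc ‖(starRingEnd ℂ) (ψ i) * ψ j * ((starRingEnd ℂ) (ψ k) * ψ l)‖
      = ‖ψ i‖ * ‖ψ j‖ * (‖ψ k‖ * ‖ψ l‖) := by simp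
    _ ≤ 1 * 1 * (1 * 1) := by
        gcongr <;> first | exact hψ _ | positivity
    _ = 1 := by norm_num

noncomputable def rc : ℂ := ((Real.sqrt 2)⁻¹ : ℝ)

lemma rc_mul_rc : rc * rc = (2:ℂ)⁻¹ := by
  unfold rc
  rw [← Complex.ofReal_mul, ← mul_inv, Real.mul_self_sqrt (by norm_num)]
  norm_num

lemma conj_rc : (starRingEnd ℂ) rc = rc := Complex.conj_ofReal _

noncomputable def rotM (i k : Fin d) : Matrix (Fin d) (Fin d) ℂ :=
  Matrix.single i i rc + Matrix.single i k rc + Matrix.single k i rc - Matrix.single k k rc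
  + (1 - Matrix.single i i 1 - Matrix.single k k 1)

lemma stdBasis_conjT (a b : Fin d) (v : ℂ) :
    (Matrix.single a b v)ᴴ = Matrix.single b a ((starRingEnd ℂ) v) := by
  ext x y
  simp only [conjTranspose_apply, Matrix.single, of_apply]
  split_ifs with h1 h2 h2 <;> simp_all [and_comm] <;> tauto

lemma rotM_star (i k : Fin d) : star (rotM i k) = rotM i k := by
  show (rotM i k)ᴴ = rotM i k
  unfold rotM
  simp [conjTranspose_add, conjTranspose_sub, stdBasis_conjT, conj_rc, conjTranspose_one]
  abel

lemma rotM_mulVec (i k : Fin d) (hik : i ≠ k) (ψ : Fin d → ℂ) :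
    rotM i k *ᵥ ψ = fun n =>
      if n = i then rc * (ψ i + ψ k) else if n = k then rc * (ψ i - ψ k) else ψ n := by
  funext n
  unfold rotM
  simp only [add_mulVec, sub_mulVec, single_mulVec, one_mulVec, Pi.add_apply,
    Pi.sub_apply, Function.update_apply, Pi.zero_apply]
  by_cases h1 : n = i <;> by_cases h2 : n = k <;> simp_all <;> ring

lemma rotM_unitary (i k : Fin d) (hik : i ≠ k) :
    rotM i k ∈ Matrix.unitaryGroup (Fin d) ℂ := by
  rw [Matrix.mem_unitaryGroup_iff, rotM_star]
  have key : ∀ v, (rotM i k * rotM i k) *ᵥ v = (1 : Matrix (Fin d) (Fin d) ℂ) *ᵥ v := by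
    intro v
    rw [← mulVec_mulVec, rotM_mulVec i k hik, rotM_mulVec i k hik, one_mulVec]
    funext n
    by_cases h1 : n = i
    · simp_all [Ne.symm hik]
      linear_combination (2 * v i) * rc_mul_rc
    · by_cases h2 : n = k
      · simp_all [Ne.symm hik]
        linear_combination (2 * v k) * rc_mul_rc
      · simp_all
  ext a b
  have := congrFun (key (Pi.single b 1)) a
  simpa [mulVec_single] using this

noncomputable def swapM (i k : Fin d) : Matrix (Fin d) (Fin d) ℂ :=
  Matrix.single i k 1 + Matrix.single k i 1 + (1 - Matrix.single i i 1 - Matrix.single k k 1)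

lemma swapM_star (i k : Fin d) : star (swapM i k) = swapM i k := by
  show (swapM i k)ᴴ = swapM i k
  unfold swapM
  simp [conjTranspose_add, conjTranspose_sub, stdBasis_conjT, conjTranspose_one]
  abel

lemma swapM_mulVec (i k : Fin d) (ψ : Fin d → ℂ) :
    swapM i k *ᵥ ψ = fun n => if n = i then ψ k else if n = k then ψ i else ψ n := by
  funext n
  unfold swapM
  simp only [add_mulVec, sub_mulVec, single_mulVec, one_mulVec, Pi.add_apply,
    Pi.sub_apply, Function.update_apply, Pi.zero_apply]
  by_cases h1 : n = i <;> by_cases h2 : n = k <;> simp_all <;> ring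

lemma swapM_unitary (i k : Fin d) : swapM i k ∈ Matrix.unitaryGroup (Fin d) ℂ := by
  rw [Matrix.mem_unitaryGroup_iff, swapM_star]
  have key : ∀ v, (swapM i k * swapM i k) *ᵥ v = (1 : Matrix (Fin d) (Fin d) ℂ) *ᵥ v := by
    intro v
    rw [← mulVec_mulVec, swapM_mulVec, swapM_mulVec, one_mulVec]
    funext n
    by_cases h1 : n = i <;> by_cases h2 : n = k <;> simp_all
  ext a b
  have := congrFun (key (Pi.single b 1)) a
  simpa [mulVec_single] using this

section Tlemmas

variable (μ : Measure (Fin d → ℂ)) [IsProbabilityMeasure μ]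

/-- the fourth moment tensor -/
noncomputable def T (i j k l : Fin d) : ℂ := ∫ ψ, mono i j k l ψ ∂μ

lemma T_congr {i j k l i' j' k' l' : Fin d}
    (h : ∀ ψ : Fin d → ℂ, mono i j k l ψ = mono i' j' k' l' ψ) :
    T μ i j k l = T μ i' j' k' l' := by
  unfold T; congr 1; funext ψ; exact h ψ

variable (hinv : ∀ U ∈ Matrix.unitaryGroup (Fin d) ℂ, μ.map (fun ψ => U.mulVec ψ) = μ)

include hinv in
lemma T_swap (i k : Fin d) : T μ i i i i = T μ k k k k := by
  by_cases hik : i = k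
  · rw [hik]
  unfold T
  rw [integral_inv' μ hinv _ (swapM_unitary i k) _ (mono_continuous i i i i).aestronglyMeasurable]
  congr 1; funext ψ
  simp [mono, swapM_mulVec]

include hinv in
lemma T_zero (i j k l : Fin d) (h1 : ¬(i = j ∧ k = l)) (h2 : ¬(i = l ∧ j = k)) :
    T μ i j k l = 0 := phase_zero μ hinv i j k l h1 h2

variable (hsphere : ∀ᵐ ψ ∂μ, ∑ i, Complex.normSq (ψ i) = 1)

include hinv hsphere in
lemma T_rot (i k : Fin d) (hik : i ≠ k) :
    T μ i i i i + T μ k k k k = 4 * T μ i i k k := by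
  classical
  set f : (Fin d → ℂ) → ℂ := fun ψ =>
    mono i i i i ψ - mono i i k k ψ - mono k k i i ψ + mono k k k k ψ with hf
  have hfmeas : AEStronglyMeasurable f μ :=
    ((((mono_continuous i i i i).sub (mono_continuous i i k k)).sub
      (mono_continuous k k i i)).add (mono_continuous k k k k)).aestronglyMeasurable
  have Ia := mono_integrable μ hsphere i i i i
  have Ib := mono_integrable μ hsphere i i k k
  have Ic := mono_integrable μ hsphere k k i i
  have Id := mono_integrable μ hsphere k k k k
  have I1 : Integrable (fun ψ => mono i i i i ψ - mono i i k k ψ) μ := Ia.sub Ib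
  have I2 : Integrable (fun ψ => mono i i i i ψ - mono i i k k ψ - mono k k i i ψ) μ := I1.sub Ic
  have h1 : ∫ ψ, f ψ ∂μ = T μ i i i i - T μ i i k k - T μ k k i i + T μ k k k k := by
    simp only [hf]
    rw [integral_add I2 Id, integral_sub I1 Ic, integral_sub Ia Ib]
    rfl
  have Ja := mono_integrable μ hsphere i k i k
  have Jb := mono_integrable μ hsphere i k k i
  have Jc := mono_integrable μ hsphere k i i k
  have Jd := mono_integrable μ hsphere k i k i
  have J1 : Integrable (fun ψ => mono i k i k ψ + mono i k k i ψ) μ := Ja.add Jb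
  have J2 : Integrable (fun ψ => mono i k i k ψ + mono i k k i ψ + mono k i i k ψ) μ := J1.add Jc
  have h2 : ∫ ψ, f ψ ∂μ
      = T μ i k i k + T μ i k k i + T μ k i i k + T μ k i k i := by
    rw [integral_inv' μ hinv _ (rotM_unitary i k hik) _ hfmeas]
    have hpt : ∀ ψ : Fin d → ℂ, f (rotM i k *ᵥ ψ)
        = mono i k i k ψ + mono i k k i ψ + mono k i i k ψ + mono k i k i ψ := by
      intro ψ
      simp [hf, mono, rotM_mulVec i k hik, Ne.symm hik, hik, conj_rc]
      linear_combination (((starRingEnd ℂ) (ψ i) * ψ k + (starRingEnd ℂ) (ψ k) * ψ i)^2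
        * (4*(rc*rc) + 2)) * rc_mul_rc
    rw [MeasureTheory.integral_congr_ae (Filter.Eventually.of_forall hpt)]
    rw [integral_add J2 Jd, integral_add J1 Jc, integral_add Ja Jb]
    rfl
  have hz1 : T μ i k i k = 0 := T_zero μ hinv i k i k (by tauto) (by tauto)
  have hz2 : T μ k i k i = 0 := T_zero μ hinv k i k i (by tauto) (by tauto)
  have he1 : T μ i k k i = T μ i i k k := T_congr μ (by intro ψ; unfold mono; ring)
  have he2 : T μ k i i k = T μ i i k k := T_congr μ (by intro ψ; unfold mono; ring)
  have he3 : T μ k k i i = T μ i i k k := T_congr μ (by intro ψ; unfold mono; ring)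
  rw [h1, hz1, hz2, he1, he2, he3] at h2
  linear_combination h2
  
include hsphere in
lemma T_norm : ∑ i : Fin d, ∑ k : Fin d, T μ i i k k = 1 := by
  have h1 : ∑ i : Fin d, ∑ k : Fin d, T μ i i k k
      = ∫ ψ, ∑ i : Fin d, ∑ k : Fin d, mono i i k k ψ ∂μ := by
    rw [integral_finset_sum _
      (fun i _ => integrable_finset_sum _ (fun k _ => mono_integrable μ hsphere i i k k))]
    exact Finset.sum_congr rfl fun i _ =>
      (integral_finset_sum _ (fun k _ => mono_integrable μ hsphere i i k k)).symm
  rw [h1]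
  have h2 : ∀ᵐ ψ ∂μ, ∑ i : Fin d, ∑ k : Fin d, mono i i k k ψ = 1 := by
    filter_upwards [hsphere] with ψ hψ
    have hsum : ∑ i : Fin d, (starRingEnd ℂ) (ψ i) * ψ i = 1 := by
      have he : ∑ i : Fin d, (starRingEnd ℂ) (ψ i) * ψ i
          = ((∑ i, Complex.normSq (ψ i) : ℝ) : ℂ) := by
        push_cast
        exact Finset.sum_congr rfl fun i _ => (Complex.normSq_eq_conj_mul_self).symm
      rw [he, hψ]; norm_num
    calc ∑ i : Fin d, ∑ k : Fin d, mono i i k k ψ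
        = (∑ i : Fin d, (starRingEnd ℂ) (ψ i) * ψ i)
          * (∑ k : Fin d, (starRingEnd ℂ) (ψ k) * ψ k) := by
          rw [Finset.sum_mul_sum]; rfl
      _ = 1 := by rw [hsum]; ring
  rw [integral_congr_ae h2]
  simp

include hinv hsphere in
lemma T_iikk_val (hd : 0 < d) (i k : Fin d) :
    T μ i i k k = (if i = k then 2 else 1) / (d * (d + 1)) := by
  classical
  set i0 : Fin d := ⟨0, hd⟩
  set a : ℂ := T μ i0 i0 i0 i0 with ha
  have haa : ∀ m : Fin d, T μ m m m m = a := fun m => T_swap μ hinv m i0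
  have hb : ∀ m n : Fin d, m ≠ n → T μ m m n n = a / 2 := by
    intro m n hmn
    have h := T_rot μ hinv hsphere m n hmn
    rw [haa m, haa n] at h
    linear_combination (-1/4 : ℂ) * h
  have hval : ∀ m n : Fin d, T μ m m n n = (if m = n then a else a / 2) := by
    intro m n
    by_cases h : m = n
    · subst h; simp [haa m]
    · simp [h, hb m n h]
  have hnorm := T_norm μ hsphere
  have hrow : ∀ i : Fin d, ∑ k : Fin d, T μ i i k k = a / 2 * d + a / 2 := by
    intro i
    have hterm : ∀ k : Fin d, T μ i i k k = a / 2 + (if i = k then a / 2 else 0) := by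
      intro k; rw [hval i k]; split_ifs <;> ring
    simp only [hterm]
    rw [Finset.sum_add_distrib, Finset.sum_const, Finset.sum_ite_eq]
    simp [Finset.card_univ]
    ring
  rw [Finset.sum_congr rfl (fun i _ => hrow i), Finset.sum_const, Finset.card_univ] at hnorm
  simp only [Fintype.card_fin, nsmul_eq_mul] at hnorm
  have hdc : (d : ℂ) ≠ 0 := Nat.cast_ne_zero.2 hd.ne'
  have hdc1 : (d : ℂ) + 1 ≠ 0 := by
    intro h
    have : ((d + 1 : ℕ) : ℂ) = 0 := by push_cast; linear_combination h
    exact (Nat.cast_ne_zero.2 (Nat.succ_ne_zero d)) this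
  have hA : a = 2 / (d * (d + 1)) := by
    field_simp
    field_simp at hnorm
    linear_combination hnorm
  rw [hval i k, hA]
  split_ifs <;> field_simp <;> ring

include hinv hsphere in
lemma T_val (hd : 0 < d) (i j k l : Fin d) :
    T μ i j k l = ((if i = j then (1:ℂ) else 0) * (if k = l then 1 else 0)
      + (if i = l then (1:ℂ) else 0) * (if j = k then 1 else 0)) / (d * (d + 1)) := by
  classical
  by_cases h1 : i = j ∧ k = l
  · obtain ⟨rfl, rfl⟩ := h1
    rw [T_iikk_val μ hinv hsphere hd i k]
    by_cases hik : i = k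
    · subst hik; simp; norm_num
    · simp [hik, Ne.symm hik]
  · by_cases h2 : i = l ∧ j = k
    · obtain ⟨rfl, rfl⟩ := h2
      have hij : i ≠ j := by
        intro h; subst h; exact h1 ⟨rfl, rfl⟩
      have : T μ i j j i = T μ i i j j := T_congr μ (by intro ψ; unfold mono; ring)
      rw [this, T_iikk_val μ hinv hsphere hd i j]
      simp [hij, Ne.symm hij]
    · rw [T_zero μ hinv i j k l h1 h2]
      rcases not_and_or.1 h1 with h | h <;> rcases not_and_or.1 h2 with h' | h' <;>
        simp [h, h']

end Tlemmas

end Stmt1Aux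

open Stmt1Aux in
theorem stmt1 (d : ℕ) (hd : 0 < d)
    (μ : Measure (Fin d → ℂ)) [IsProbabilityMeasure μ]
    (hsphere : ∀ᵐ ψ ∂μ, ∑ i, Complex.normSq (ψ i) = 1)
    (hinv : ∀ U ∈ Matrix.unitaryGroup (Fin d) ℂ,
      μ.map (fun ψ => U.mulVec ψ) = μ)
    (A B : Matrix (Fin d) (Fin d) ℂ) (hA : A.IsHermitian) (hB : B.IsHermitian) :
    ∫ ψ, (star ψ ⬝ᵥ A.mulVec ψ) * (star ψ ⬝ᵥ B.mulVec ψ) ∂μ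
      = (A.trace * B.trace + (A * B).trace) / (d * (d + 1)) := by
  classical
  have hdot : ∀ (M : Matrix (Fin d) (Fin d) ℂ) (ψ : Fin d → ℂ),
      star ψ ⬝ᵥ M.mulVec ψ
        = ∑ p : Fin d × Fin d, (starRingEnd ℂ) (ψ p.1) * ψ p.2 * M p.1 p.2 := by
    intro M ψ
    rw [Fintype.sum_prod_type]
    simp only [dotProduct, Matrix.mulVec, Pi.star_apply, RCLike.star_def, Finset.mul_sum]
    exact Finset.sum_congr rfl fun i _ => Finset.sum_congr rfl fun j _ => by ring
  have hpt : ∀ ψ : Fin d → ℂ, (star ψ ⬝ᵥ A.mulVec ψ) * (star ψ ⬝ᵥ B.mulVec ψ)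
      = ∑ p : Fin d × Fin d, ∑ q : Fin d × Fin d,
          A p.1 p.2 * B q.1 q.2 * mono p.1 p.2 q.1 q.2 ψ := by
    intro ψ
    rw [hdot A ψ, hdot B ψ, Finset.sum_mul_sum]
    exact Finset.sum_congr rfl fun p _ => Finset.sum_congr rfl fun q _ => by
      unfold mono; ring
  rw [integral_congr_ae (Filter.Eventually.of_forall hpt)]
  rw [integral_finset_sum _ (fun p _ => integrable_finset_sum _ (fun q _ =>
    (mono_integrable μ hsphere p.1 p.2 q.1 q.2).const_mul (A p.1 p.2 * B q.1 q.2)))]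
  have hterm : ∀ p q : Fin d × Fin d,
      ∫ ψ, A p.1 p.2 * B q.1 q.2 * mono p.1 p.2 q.1 q.2 ψ ∂μ
        = A p.1 p.2 * B q.1 q.2 * T μ p.1 p.2 q.1 q.2 := by
    intro p q
    exact integral_const_mul _ _
  have hsum : ∑ p : Fin d × Fin d, ∑ q : Fin d × Fin d,
      (∫ ψ, A p.1 p.2 * B q.1 q.2 * mono p.1 p.2 q.1 q.2 ψ ∂μ)
      = ∑ p : Fin d × Fin d, ∑ q : Fin d × Fin d,
        A p.1 p.2 * B q.1 q.2 * (((if p.1 = p.2 then (1:ℂ) else 0) * (if q.1 = q.2 then 1 else 0)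
          + (if p.1 = q.2 then (1:ℂ) else 0) * (if p.2 = q.1 then 1 else 0)) / (d * (d + 1))) := by
    refine Finset.sum_congr rfl fun p _ => ?_
    refine Finset.sum_congr rfl fun q _ => ?_
    rw [hterm p q, T_val μ hinv hsphere hd p.1 p.2 q.1 q.2]
  rw [Finset.sum_congr rfl fun p _ => integral_finset_sum _ (fun q _ =>
    (mono_integrable μ hsphere p.1 p.2 q.1 q.2).const_mul (A p.1 p.2 * B q.1 q.2))]
  rw [hsum]
  have hTr : ∀ M : Matrix (Fin d) (Fin d) ℂ,
      ∑ p : Fin d × Fin d, M p.1 p.2 * (if p.1 = p.2 then (1:ℂ) else 0) = M.trace := by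
    intro M
    rw [Fintype.sum_prod_type]
    simp [mul_ite, mul_one, mul_zero, Finset.sum_ite_eq, Matrix.trace, Matrix.diag]
  have hS1 : ∑ p : Fin d × Fin d, ∑ q : Fin d × Fin d,
      A p.1 p.2 * B q.1 q.2 * ((if p.1 = p.2 then (1:ℂ) else 0) * (if q.1 = q.2 then 1 else 0))
      = A.trace * B.trace := by
    have : ∀ p q : Fin d × Fin d,
        A p.1 p.2 * B q.1 q.2 * ((if p.1 = p.2 then (1:ℂ) else 0) * (if q.1 = q.2 then 1 else 0))
        = (A p.1 p.2 * (if p.1 = p.2 then (1:ℂ) else 0))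
          * (B q.1 q.2 * (if q.1 = q.2 then (1:ℂ) else 0)) := by
      intro p q; ring
    simp only [this]
    rw [← Finset.sum_mul_sum, hTr A, hTr B]
  have hS2 : ∑ p : Fin d × Fin d, ∑ q : Fin d × Fin d,
      A p.1 p.2 * B q.1 q.2 * ((if p.1 = q.2 then (1:ℂ) else 0) * (if p.2 = q.1 then 1 else 0))
      = (A * B).trace := by
    rw [Fintype.sum_prod_type]
    simp only [Fintype.sum_prod_type]
    simp [mul_ite, mul_one, mul_zero, ite_mul, zero_mul, Finset.sum_ite_eq, Finset.sum_ite_eq',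
      Matrix.trace, Matrix.diag, Matrix.mul_apply]
  have hflat : ∑ p : Fin d × Fin d, ∑ q : Fin d × Fin d,
      A p.1 p.2 * B q.1 q.2 * (((if p.1 = p.2 then (1:ℂ) else 0) * (if q.1 = q.2 then 1 else 0)
        + (if p.1 = q.2 then (1:ℂ) else 0) * (if p.2 = q.1 then 1 else 0)))
      = A.trace * B.trace + (A * B).trace := by
    simp only [mul_add, Finset.sum_add_distrib]
    rw [hS1, hS2]
  calc ∑ p : Fin d × Fin d, ∑ q : Fin d × Fin d,
      A p.1 p.2 * B q.1 q.2 * (((if p.1 = p.2 then (1:ℂ) else 0) * (if q.1 = q.2 then 1 else 0)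
        + (if p.1 = q.2 then (1:ℂ) else 0) * (if p.2 = q.1 then 1 else 0)) / (d * (d + 1)))
      = (∑ p : Fin d × Fin d, ∑ q : Fin d × Fin d,
        A p.1 p.2 * B q.1 q.2 * (((if p.1 = p.2 then (1:ℂ) else 0) * (if q.1 = q.2 then 1 else 0)
          + (if p.1 = q.2 then (1:ℂ) else 0) * (if p.2 = q.1 then 1 else 0)))) / (d * (d + 1)) := by
        rw [Finset.sum_div]
        refine Finset.sum_congr rfl fun p _ => ?_
        rw [Finset.sum_div]
        refine Finset.sum_congr rfl fun q _ => ?_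
        ring
    _ = (A.trace * B.trace + (A * B).trace) / (d * (d + 1)) := by rw [hflat]
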